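/- Let ℓ ≥ 1 and 1 ≤ κ ≤ ℓ+1 be integers. Let A^{[κ]} be the ℓ×ℓ real matrix with entries (A^{[κ]})_{ij} = ((i-1)(ℓ+1) + r_j^{[κ]})^{ℓ-1}, where r_j^{[κ]} = j for 1 ≤ j ≤ κ-1 and r_j^{[κ]} = j+1 for κ ≤ j ≤ ℓ. Then det(A^{[κ]}) = (-1)^ℓ · σ_ℓ · C(ℓ, κ-1), where σ_ℓ = (-1)^{ℓ(ℓ+1)/2} · (ℓ+1)^{ℓ(ℓ-1)/2} · ∏_{j=0}^{ℓ-1} C(ℓ-1,j) · ∏_{j=1}^{ℓ-1} (j!)^2. -/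

import Mathlib

open Finset

/-- The constant `σ_ℓ`. -/
noncomputable def sigma (ℓ : ℕ) : ℝ :=
  (-1 : ℝ) ^ (ℓ * (ℓ + 1) / 2) * ((ℓ + 1 : ℕ) : ℝ) ^ (ℓ * (ℓ - 1) / 2) *
    (∏ j ∈ Finset.range ℓ, ((ℓ - 1).choose j : ℝ)) *
      (∏ j ∈ Finset.Ico 1 ℓ, ((j.factorial : ℝ)) ^ 2)

/-- The sequence `r^{[κ]}`: the integers `1, …, ℓ+1` with the value `κ` omitted; here
`j : Fin ℓ` corresponds to the 1-indexed position `j+1`. -/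
def rseq (κ : ℕ) (j : ℕ) : ℕ := if j < κ then j else j + 1

/-- Product over ordered pairs `i < j`. -/
def pairProd {M : Type*} [CommMonoid M] {n : ℕ} (f : Fin n → Fin n → M) : M :=
  ∏ i, ∏ j, if i < j then f i j else 1

lemma pairProd_eq_prod_Ioi {M : Type*} [CommMonoid M] {n : ℕ} (f : Fin n → Fin n → M) :
    (∏ i, ∏ j ∈ Finset.Ioi i, f i j) = pairProd f := by
  unfold pairProd
  refine Finset.prod_congr rfl fun i _ => ?_
  rw [← Finset.prod_filter]
  congr 1
  ext j; simp [Finset.mem_Ioi]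

lemma pairProd_congr {M : Type*} [CommMonoid M] {n : ℕ} {f g : Fin n → Fin n → M}
    (h : ∀ i j, i < j → f i j = g i j) : pairProd f = pairProd g := by
  unfold pairProd
  refine Finset.prod_congr rfl fun i _ => Finset.prod_congr rfl fun j _ => ?_
  by_cases hij : i < j <;> simp [hij, h i j]

lemma pairProd_mul {M : Type*} [CommMonoid M] {n : ℕ} (f g : Fin n → Fin n → M) :
    pairProd (fun i j => f i j * g i j) = pairProd f * pairProd g := by
  unfold pairProd
  rw [← Finset.prod_mul_distrib]
  refine Finset.prod_congr rfl fun i _ => ?_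
  rw [← Finset.prod_mul_distrib]
  refine Finset.prod_congr rfl fun j _ => ?_
  split <;> simp

lemma pairProd_cast {n : ℕ} (f : Fin n → Fin n → ℕ) :
    ((pairProd f : ℕ) : ℝ) = pairProd fun i j => ((f i j : ℕ) : ℝ) := by
  unfold pairProd
  push_cast [apply_ite (Nat.cast : ℕ → ℝ)]
  rfl

lemma pairProd_const {M : Type*} [CommMonoid M] {n : ℕ} (c : M) :
    pairProd (fun _ _ : Fin n => c) = c ^ (n * (n - 1) / 2) := by
  unfold pairProd
  have h1 : ∀ i : Fin n, (∏ j : Fin n, if i < j then c else 1) = c ^ (n - 1 - (i : ℕ)) := by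
    intro i
    rw [← Finset.prod_filter, Finset.prod_const]
    congr 1
    rw [show Finset.univ.filter (fun j => i < j) = Finset.Ioi i from by ext j; simp]
    exact Fin.card_Ioi i
  rw [Finset.prod_congr rfl fun i _ => h1 i, Finset.prod_pow_eq_pow_sum]
  congr 1
  rw [Fin.sum_univ_eq_sum_range (fun m => n - 1 - m) n, Finset.sum_range_reflect (fun m => m) n]
  exact Finset.sum_range_id n

lemma range_prod_if (m N : ℕ) (h : m ≤ N) :
    (∏ i ∈ range N, if i < m then m - i else 1) = m.factorial := by
  rw [← Finset.prod_filter]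
  rw [show (range N).filter (· < m) = range m from by ext i; simp; omega]
  rw [Finset.prod_congr rfl (fun i hi => show m - i = (fun t => t + 1) (m - 1 - i) from by
    simp only [Finset.mem_range] at hi; show m - i = m - 1 - i + 1; omega)]
  rw [Finset.prod_range_reflect (fun t => t + 1) m]
  exact Finset.prod_range_add_one_eq_factorial m

lemma fin_prod_if {n : ℕ} (j : Fin n) :
    (∏ i : Fin n, if i < j then (j : ℕ) - (i : ℕ) else 1) = (j : ℕ).factorial := by
  simp only [Fin.lt_def]
  rw [Fin.prod_univ_eq_prod_range (fun m => if m < (j : ℕ) then (j : ℕ) - m else 1) n]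
  exact range_prod_if _ _ (le_of_lt j.isLt)

lemma pairProd_id_nat (n : ℕ) :
    pairProd (fun i j : Fin n => (j : ℕ) - (i : ℕ)) = ∏ k ∈ range n, k.factorial := by
  unfold pairProd
  rw [Finset.prod_comm]
  rw [Finset.prod_congr rfl fun j _ => fin_prod_if j]
  exact Fin.prod_univ_eq_prod_range (fun m => m.factorial) n

lemma prodB (n : ℕ) (p : Fin (n + 1)) :
    (∏ j : Fin n, if p < p.succAbove j then ((p.succAbove j : ℕ) - (p : ℕ)) else 1)
      = (n - (p : ℕ)).factorial := by
  have hterm : ∀ j : Fin n,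
      (if p < p.succAbove j then ((p.succAbove j : ℕ) - (p : ℕ)) else 1)
        = (fun m => if (p : ℕ) ≤ m then m + 1 - (p : ℕ) else 1) (j : ℕ) := by
    intro j
    by_cases h : (p : ℕ) ≤ (j : ℕ)
    · have hc : p ≤ Fin.castSucc j := by rw [Fin.le_def]; simpa using h
      rw [Fin.succAbove_of_le_castSucc p j hc]
      have h2 : p < Fin.succ j := by rw [Fin.lt_def]; simp; omega
      simp [h2, h]
    · have hc : Fin.castSucc j < p := by rw [Fin.lt_def]; simp; omega
      rw [Fin.succAbove_of_castSucc_lt p j hc]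
      have h2 : ¬ p < Fin.castSucc j := by rw [Fin.lt_def]; simp; omega
      simp [h2, h]
  rw [Finset.prod_congr rfl fun j _ => hterm j,
    Fin.prod_univ_eq_prod_range (fun m => if (p : ℕ) ≤ m then m + 1 - (p : ℕ) else 1) n,
    ← Finset.prod_filter,
    show (range n).filter (fun m => (p : ℕ) ≤ m) = Finset.Ico (p : ℕ) n from by
      ext m; simp; omega,
    Finset.prod_Ico_eq_prod_range]
  rw [Finset.prod_congr rfl (fun t _ => show (p : ℕ) + t + 1 - (p : ℕ) = t + 1 from by omega)]
  exact Finset.prod_range_add_one_eq_factorial _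

lemma key_split (n : ℕ) (p : Fin (n + 1)) :
    pairProd (fun i j : Fin n => (p.succAbove j : ℕ) - (p.succAbove i : ℕ))
        * ((p : ℕ).factorial * (n - (p : ℕ)).factorial)
      = ∏ k ∈ range (n + 1), k.factorial := by
  have hC : (∏ j : Fin n, ∏ i : Fin n,
      if p.succAbove i < p.succAbove j then ((p.succAbove j : ℕ) - (p.succAbove i : ℕ)) else 1)
      = pairProd (fun i j : Fin n => (p.succAbove j : ℕ) - (p.succAbove i : ℕ)) := by
    unfold pairProd
    rw [Finset.prod_comm]
    exact Finset.prod_congr rfl fun i _ => Finset.prod_congr rfl fun j _ => by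
      simp only [Fin.succAbove_lt_succAbove_iff]
  have hmain : pairProd (fun i j : Fin (n+1) => (j : ℕ) - (i : ℕ))
      = (p : ℕ).factorial * ((n - (p : ℕ)).factorial
          * pairProd (fun i j : Fin n => (p.succAbove j : ℕ) - (p.succAbove i : ℕ))) := by
    calc pairProd (fun i j : Fin (n+1) => (j : ℕ) - (i : ℕ))
        = ∏ j : Fin (n+1), ∏ i : Fin (n+1), if i < j then (j : ℕ) - (i : ℕ) else 1 := by
          unfold pairProd; exact Finset.prod_comm
      _ = (∏ i : Fin (n+1), if i < p then (p : ℕ) - (i : ℕ) else 1)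
            * ∏ j : Fin n, ∏ i : Fin (n+1),
                if i < p.succAbove j then ((p.succAbove j : ℕ) - (i : ℕ)) else 1 :=
          Fin.prod_univ_succAbove
            (fun j : Fin (n+1) => ∏ i : Fin (n+1), if i < j then (j : ℕ) - (i : ℕ) else 1) p
      _ = (p : ℕ).factorial * ∏ j : Fin n,
            ((if p < p.succAbove j then ((p.succAbove j : ℕ) - (p : ℕ)) else 1)
              * ∏ i : Fin n, if p.succAbove i < p.succAbove j
                  then ((p.succAbove j : ℕ) - (p.succAbove i : ℕ)) else 1) := by
          rw [fin_prod_if p]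
          exact congrArg _ (Finset.prod_congr rfl (fun j _ => Fin.prod_univ_succAbove
            (fun i : Fin (n+1) =>
              if i < p.succAbove j then ((p.succAbove j : ℕ) - (i : ℕ)) else 1) p))
      _ = (p : ℕ).factorial * ((n - (p : ℕ)).factorial
            * pairProd (fun i j : Fin n => (p.succAbove j : ℕ) - (p.succAbove i : ℕ))) := by
          rw [Finset.prod_mul_distrib, prodB n p, hC]
  rw [← pairProd_id_nat (n + 1), hmain]
  ring

lemma pairProd_rev {M : Type*} [CommMonoid M] {n : ℕ} (g : Fin n → Fin n → M) :
    pairProd (fun i j => g (Fin.rev i) (Fin.rev j)) = pairProd (fun i j => g j i) := by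
  unfold pairProd
  rw [← Equiv.prod_comp (Fin.revPerm (n := n))
    (fun i => ∏ j, if i < j then g (Fin.rev i) (Fin.rev j) else 1)]
  simp only [Fin.revPerm_apply, Fin.rev_rev]
  have h1 : ∀ i : Fin n, (∏ j, if Fin.rev i < j then g i (Fin.rev j) else 1)
      = ∏ j, if j < i then g i j else 1 := by
    intro i
    rw [← Equiv.prod_comp (Fin.revPerm (n := n))
      (fun j => if Fin.rev i < j then g i (Fin.rev j) else 1)]
    simp only [Fin.revPerm_apply, Fin.rev_rev, Fin.rev_lt_rev]
  rw [Finset.prod_congr rfl fun i _ => h1 i, Finset.prod_comm]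

theorem det_submatrix (ℓ κ : ℕ) (hℓ : 1 ≤ ℓ) (hκ1 : 1 ≤ κ) (hκ : κ ≤ ℓ + 1) :
    (Matrix.of fun i j : Fin ℓ =>
        ((((i : ℕ) * (ℓ + 1) + rseq κ ((j : ℕ) + 1) : ℕ)) : ℝ) ^ (ℓ - 1)).det =
      (-1 : ℝ) ^ ℓ * sigma ℓ * (ℓ.choose (κ - 1) : ℝ) := by
  set p : Fin (ℓ + 1) := ⟨κ - 1, by omega⟩ with hp
  have hpv : (p : ℕ) = κ - 1 := rfl
  -- value of succAbove
  have hsval : ∀ j : Fin ℓ, (p.succAbove j : ℕ) = if (j : ℕ) < κ - 1 then (j : ℕ) else (j : ℕ) + 1 := by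
    intro j
    by_cases h : (j : ℕ) < κ - 1
    · rw [Fin.succAbove_of_castSucc_lt p j (by rw [Fin.lt_def]; simpa [hpv] using h)]
      simp [h]
    · rw [Fin.succAbove_of_le_castSucc p j (by rw [Fin.le_def]; simp [hpv]; omega)]
      simp [h]
  have hr : ∀ j : Fin ℓ, rseq κ ((j : ℕ) + 1) = (p.succAbove j : ℕ) + 1 := by
    intro j; rw [hsval j]; unfold rseq; split_ifs <;> omega
  have hs_mono : ∀ i j : Fin ℓ, i < j → (p.succAbove i : ℕ) < (p.succAbove j : ℕ) := by
    intro i j hij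
    exact Fin.lt_def.mp ((Fin.succAbove_lt_succAbove_iff (p := p)).mpr hij)
  -- the matrix decomposition
  have hM : (Matrix.of fun i j : Fin ℓ =>
        ((((i : ℕ) * (ℓ + 1) + rseq κ ((j : ℕ) + 1) : ℕ)) : ℝ) ^ (ℓ - 1))
      = (Matrix.vandermonde fun i : Fin ℓ => (((i : ℕ) * (ℓ + 1) : ℕ) : ℝ)) *
        (Matrix.of fun k j : Fin ℓ =>
          (((ℓ - 1).choose (k : ℕ) : ℕ) : ℝ)
            * ((rseq κ ((j : ℕ) + 1) : ℕ) : ℝ) ^ (ℓ - 1 - (k : ℕ))) := by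
    ext i j
    rw [Matrix.mul_apply]
    simp only [Matrix.of_apply, Matrix.vandermonde_apply]
    rw [Fin.sum_univ_eq_sum_range (fun k => (((i : ℕ) * (ℓ + 1) : ℕ) : ℝ) ^ k *
      ((((ℓ - 1).choose k : ℕ) : ℝ) * ((rseq κ ((j : ℕ) + 1) : ℕ) : ℝ) ^ (ℓ - 1 - k))) ℓ]
    rw [Nat.cast_add, add_pow, show ℓ - 1 + 1 = ℓ from by omega]
    exact Finset.sum_congr rfl fun k _ => by push_cast; ring
  rw [hM, Matrix.det_mul]
  -- determinant of the Vandermonde part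
  have hdetV : (Matrix.vandermonde fun i : Fin ℓ => (((i : ℕ) * (ℓ + 1) : ℕ) : ℝ)).det
      = ((ℓ + 1 : ℕ) : ℝ) ^ (ℓ * (ℓ - 1) / 2) * ((∏ k ∈ range ℓ, k.factorial : ℕ) : ℝ) := by
    rw [Matrix.det_vandermonde, pairProd_eq_prod_Ioi]
    rw [pairProd_congr (g := fun i j : Fin ℓ => (((j : ℕ) - (i : ℕ) : ℕ) : ℝ) * ((ℓ + 1 : ℕ) : ℝ))
      (fun i j hij => by
        have h : (i : ℕ) ≤ (j : ℕ) := (Fin.lt_def.mp hij).le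
        push_cast [Nat.cast_sub h]
        ring)]
    rw [pairProd_mul, ← pairProd_cast, pairProd_id_nat, pairProd_const]
    push_cast
    ring
  rw [hdetV]
  -- determinant of the second factor
  have hAeq : (Matrix.of fun k j : Fin ℓ =>
        ((rseq κ ((j : ℕ) + 1) : ℕ) : ℝ) ^ (ℓ - 1 - (k : ℕ)))
      = ((Matrix.vandermonde fun j : Fin ℓ =>
            ((rseq κ ((Fin.rev j : Fin ℓ) + 1 : ℕ) : ℕ) : ℝ)).transpose).submatrix
          Fin.revPerm Fin.revPerm := by
    ext k j
    simp only [Matrix.submatrix_apply, Matrix.of_apply, Fin.revPerm_apply, Fin.rev_rev,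
      Matrix.transpose_apply, Matrix.vandermonde_apply]
    congr 1
    rw [Fin.val_rev]
    omega
  have hkey : pairProd (fun i j : Fin ℓ => (p.succAbove j : ℕ) - (p.succAbove i : ℕ))
      = ℓ.choose (κ - 1) * ∏ k ∈ range ℓ, k.factorial := by
    have h1 := key_split ℓ p
    have h2 : ℓ.choose (κ - 1) * ((κ - 1).factorial * (ℓ - (κ - 1)).factorial) = ℓ.factorial := by
      rw [← mul_assoc]
      exact Nat.choose_mul_factorial_mul_factorial (by omega)
    apply Nat.eq_of_mul_eq_mul_right
      (show 0 < (κ - 1).factorial * (ℓ - (κ - 1)).factorial by positivity)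
    rw [hpv] at h1
    rw [h1, Finset.prod_range_succ, ← h2]
    ring
  have hdetA : (Matrix.of fun k j : Fin ℓ =>
        ((rseq κ ((j : ℕ) + 1) : ℕ) : ℝ) ^ (ℓ - 1 - (k : ℕ))).det
      = (-1 : ℝ) ^ (ℓ * (ℓ - 1) / 2)
          * ((ℓ.choose (κ - 1) * ∏ k ∈ range ℓ, k.factorial : ℕ) : ℝ) := by
    rw [hAeq, Matrix.det_submatrix_equiv_self, Matrix.det_transpose, Matrix.det_vandermonde,
      pairProd_eq_prod_Ioi]
    have := pairProd_rev (n := ℓ)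
      (fun a b => ((rseq κ ((b : ℕ) + 1) : ℕ) : ℝ) - ((rseq κ ((a : ℕ) + 1) : ℕ) : ℝ))
    rw [this]
    rw [pairProd_congr (g := fun i j : Fin ℓ =>
        (-1 : ℝ) * ((((p.succAbove j : ℕ) - (p.succAbove i : ℕ) : ℕ) : ℝ))
      ) (fun i j hij => by
        have hle := (hs_mono i j hij).le
        push_cast [hr i, hr j, Nat.cast_sub hle]
        ring)]
    rw [pairProd_mul, pairProd_const, ← pairProd_cast, hkey]
  erw [Matrix.det_mul_column (fun k : Fin ℓ => (((ℓ - 1).choose (k : ℕ) : ℕ) : ℝ))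
    (Matrix.of fun k j : Fin ℓ => ((rseq κ ((j : ℕ) + 1) : ℕ) : ℝ) ^ (ℓ - 1 - (k : ℕ)))]
  erw [hdetA]
  -- now pure arithmetic
  have hbinom : (∏ k : Fin ℓ, (((ℓ - 1).choose (k : ℕ) : ℕ) : ℝ))
      = ∏ j ∈ Finset.range ℓ, ((ℓ - 1).choose j : ℝ) :=
    Fin.prod_univ_eq_prod_range (fun m => (((ℓ - 1).choose m : ℕ) : ℝ)) ℓ
  have hsq : ((∏ k ∈ range ℓ, k.factorial : ℕ) : ℝ) ^ 2
      = ∏ j ∈ Finset.Ico 1 ℓ, ((j.factorial : ℝ)) ^ 2 := by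
    push_cast
    rw [← Finset.prod_pow]
    rw [Finset.range_eq_Ico, Finset.prod_eq_prod_Ico_succ_bot hℓ]
    simp
  have hdiv : ℓ * (ℓ + 1) / 2 = ℓ * (ℓ - 1) / 2 + ℓ := by
    obtain ⟨m, rfl⟩ : ∃ m, ℓ = m + 1 := ⟨ℓ - 1, by omega⟩
    rw [show (m + 1) * (m + 1 + 1) = (m + 1) * (m + 1 - 1) + 2 * (m + 1) from by simp; ring]
    rw [Nat.add_mul_div_left _ _ (by norm_num : 0 < 2)]
  have hsign : (-1 : ℝ) ^ ℓ * (-1 : ℝ) ^ (ℓ * (ℓ + 1) / 2) = (-1 : ℝ) ^ (ℓ * (ℓ - 1) / 2) := by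
    rw [hdiv, pow_add]
    have h4 : (-1 : ℝ) ^ ℓ * (-1 : ℝ) ^ ℓ = 1 := by
      rw [← pow_add, ← two_mul, pow_mul]; norm_num
    linear_combination ((-1 : ℝ) ^ (ℓ * (ℓ - 1) / 2)) * h4
  rw [hbinom]
  unfold sigma
  rw [← hsq]
  push_cast
  linear_combination (-1 : ℝ) * ((((ℓ : ℝ) + 1) ^ (ℓ * (ℓ - 1) / 2)
      * (∏ j ∈ Finset.range ℓ, ((ℓ - 1).choose j : ℝ))
      * ((∏ k ∈ range ℓ, (k.factorial : ℝ)) ^ 2) * (ℓ.choose (κ - 1) : ℝ)) * hsign)
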